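/- Let Σ = (A, B, C) ∈ Mₙ(ℂ) × M_{n×m}(ℂ) × M_{p×n}(ℂ) be a linear control system with m = p = 1 (so B is a column vector b and C a row vector c). Then Σ is canonical (i.e., the matrices [b, Ab, …, Aⁿ⁻¹b] and [cᵀ, (cA)ᵀ, …, (cAⁿ⁻¹)ᵀ] both have rank n) if and only if the associated quiver representation on the quiver with one loop at the right vertex, one arrow left-to-right assigned b, and one arrow right-to-left assigned c, with dimension vector (1, n), is a simple representation. -/

import Mathlib

open Matrix

/-- Cayley–Hamilton consequence: every power of `A` lies in the span of `A^0, …, A^(n-1)`. -/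
lemma pow_mem_span_aux (n : ℕ) (A : Matrix (Fin n) (Fin n) ℂ) (k : ℕ) :
    A ^ k ∈ Submodule.span ℂ (Set.range fun i : Fin n => A ^ (i : ℕ)) := by
  rcases Nat.eq_zero_or_pos n with hn | hn
  · subst hn
    have : A ^ k = 0 := Subsingleton.elim _ _
    rw [this]; exact Submodule.zero_mem _
  have hdeg : A.charpoly.natDegree = n := by simpa using A.charpoly_natDegree_eq_dim
  have hAn : A ^ n = -∑ i ∈ Finset.range n, A.charpoly.coeff i • A ^ i := by
    have hch := Matrix.aeval_self_charpoly A
    rw [Polynomial.aeval_eq_sum_range, hdeg, Finset.sum_range_succ] at hch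
    have h1 : A.charpoly.coeff n = 1 := by
      have := A.charpoly_monic.coeff_natDegree
      rwa [hdeg] at this
    rw [h1, one_smul] at hch
    exact eq_neg_of_add_eq_zero_right hch
  induction k using Nat.strong_induction_on with
  | _ k ih =>
    rcases lt_or_ge k n with hk | hk
    · exact Submodule.subset_span ⟨⟨k, hk⟩, rfl⟩
    · have hk' : k = (k - n) + n := (Nat.sub_add_cancel hk).symm
      rw [hk', pow_add, hAn, mul_neg, Finset.mul_sum]
      simp_rw [Matrix.mul_smul, ← pow_add]
      refine Submodule.neg_mem _ (Submodule.sum_mem _ fun i hi => ?_)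
      have hi' : i < n := Finset.mem_range.mp hi
      exact Submodule.smul_mem _ _ (ih _ (by omega))

/-- `M ↦ M.mulVec v` as a linear map in the matrix. -/
noncomputable def mulVecRightLin (n : ℕ) (v : Fin n → ℂ) :
    Matrix (Fin n) (Fin n) ℂ →ₗ[ℂ] (Fin n → ℂ) where
  toFun M := M.mulVec v
  map_add' M N := Matrix.add_mulVec M N v
  map_smul' r M := Matrix.smul_mulVec r M v

lemma rank_eq_iff_span_top (n : ℕ) (M : Matrix (Fin n) (Fin n) ℂ) :
    M.rank = n ↔ Submodule.span ℂ (Set.range Mᵀ) = ⊤ := by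
  rw [Matrix.rank, Matrix.range_mulVecLin]
  change Module.finrank ℂ (Submodule.span ℂ (Set.range Mᵀ)) = n ↔ _
  constructor
  · intro h
    apply Submodule.eq_top_of_finrank_eq
    rw [h, Module.finrank_fin_fun]
  · intro h
    rw [h, finrank_top, Module.finrank_fin_fun]

lemma rank_eq_iff_inj (n : ℕ) (M : Matrix (Fin n) (Fin n) ℂ) :
    M.rank = n ↔ ∀ w, M.mulVec w = 0 → w = 0 := by
  have hfin : Module.finrank ℂ (Fin n → ℂ) = n := Module.finrank_fin_fun ℂ
  rw [Matrix.rank]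
  constructor
  · intro h w hw
    have hrange : LinearMap.range M.mulVecLin = ⊤ :=
      Submodule.eq_top_of_finrank_eq (by rw [h, hfin])
    have hker : LinearMap.ker M.mulVecLin = ⊥ :=
      (LinearMap.ker_eq_bot_iff_range_eq_top_of_finrank_eq_finrank rfl).mpr hrange
    have : w ∈ LinearMap.ker M.mulVecLin := hw
    rw [hker] at this
    exact this
  · intro h
    have hker : LinearMap.ker M.mulVecLin = ⊥ := by
      rw [LinearMap.ker_eq_bot']
      intro w hw
      exact h w hw
    have hrange : LinearMap.range M.mulVecLin = ⊤ :=
      (LinearMap.ker_eq_bot_iff_range_eq_top_of_finrank_eq_finrank rfl).mp hker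
    rw [hrange, finrank_top, hfin]

/-- For `m = p = 1`, a linear control system `(A, b, c)` is canonical (controllability and
observability matrices have rank `n`) iff the associated quiver representation of dimension
vector `(1, n)` is simple. -/
theorem stmt7 (n : ℕ) (A : Matrix (Fin n) (Fin n) ℂ) (b : Fin n → ℂ) (c : Fin n → ℂ) :
    ((Matrix.of fun i j : Fin n => (A ^ (j : ℕ)).mulVec b i).rank = n ∧
     (Matrix.of fun i j : Fin n => Matrix.vecMul c (A ^ (i : ℕ)) j).rank = n) ↔
    (∀ (W₁ : Submodule ℂ ℂ) (W₂ : Submodule ℂ (Fin n → ℂ)),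
      (∀ s ∈ W₁, s • b ∈ W₂) → (∀ w ∈ W₂, dotProduct c w ∈ W₁) →
      (∀ w ∈ W₂, A.mulVec w ∈ W₂) →
      (W₁ = ⊥ ∧ W₂ = ⊥) ∨ (W₁ = ⊤ ∧ W₂ = ⊤)) := by
  -- controllability matrix rank characterization
  have hMspan : (Matrix.of fun i j : Fin n => (A ^ (j : ℕ)).mulVec b i).rank = n ↔
      Submodule.span ℂ (Set.range fun j : Fin n => (A ^ (j : ℕ)).mulVec b) = ⊤ := by
    rw [rank_eq_iff_span_top]
    have : (Matrix.of fun i j : Fin n => (A ^ (j : ℕ)).mulVec b i)ᵀ =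
        fun j : Fin n => (A ^ (j : ℕ)).mulVec b := rfl
    rw [this]
  -- observability matrix rank characterization
  have hOinj : (Matrix.of fun i j : Fin n => Matrix.vecMul c (A ^ (i : ℕ)) j).rank = n ↔
      ∀ w : Fin n → ℂ, (∀ i : Fin n, c ⬝ᵥ (A ^ (i : ℕ)).mulVec w = 0) → w = 0 := by
    rw [rank_eq_iff_inj]
    have hmv : ∀ w : Fin n → ℂ, ∀ i : Fin n,
        (Matrix.of fun i j : Fin n => Matrix.vecMul c (A ^ (i : ℕ)) j).mulVec w i =
          c ⬝ᵥ (A ^ (i : ℕ)).mulVec w := by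
      intro w i
      rw [Matrix.dotProduct_mulVec]
      rfl
    constructor
    · intro h w hw
      refine h w (funext fun i => ?_)
      rw [hmv w i, hw i]
      rfl
    · intro h w hw
      refine h w fun i => ?_
      rw [← hmv w i, hw]
      rfl
  constructor
  · rintro ⟨hM, hO⟩ W₁ W₂ hbW hcW hAW
    have hpowW : ∀ w ∈ W₂, ∀ k : ℕ, (A ^ k).mulVec w ∈ W₂ := by
      intro w hw k
      induction k with
      | zero => simpa [Matrix.one_mulVec] using hw
      | succ k ihk =>
        have := hAW _ ihk
        rwa [Matrix.mulVec_mulVec, ← pow_succ'] at this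
    rcases eq_bot_or_eq_top W₁ with h1 | h1
    · left
      refine ⟨h1, ?_⟩
      rw [eq_bot_iff]
      intro w hw
      have hz : w = 0 := by
        refine (hOinj.mp hO) w fun i => ?_
        have := hcW _ (hpowW w hw i)
        rw [h1, Submodule.mem_bot] at this
        exact this
      simp [hz]
    · right
      refine ⟨h1, ?_⟩
      have hb : b ∈ W₂ := by
        have := hbW 1 (by rw [h1]; trivial)
        simpa using this
      rw [eq_top_iff, ← hMspan.mp hM]
      rw [Submodule.span_le]
      rintro x ⟨j, rfl⟩
      exact hpowW b hb j
  · intro h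
    constructor
    · -- controllability
      rw [hMspan]
      set W₂ : Submodule ℂ (Fin n → ℂ) :=
        Submodule.span ℂ (Set.range fun j : Fin n => (A ^ (j : ℕ)).mulVec b) with hW₂
      have hpow : ∀ k : ℕ, (A ^ k).mulVec b ∈ W₂ := by
        intro k
        have hmem := Submodule.apply_mem_span_image_of_mem_span (mulVecRightLin n b)
          (pow_mem_span_aux n A k)
        rw [← Set.range_comp] at hmem
        exact hmem
      have hbmem : b ∈ W₂ := by
        have := hpow 0
        rwa [pow_zero, Matrix.one_mulVec] at this
      have := h ⊤ W₂ (fun s _ => Submodule.smul_mem _ s hbmem)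
        (fun w _ => trivial)
        (by
          intro w hw
          have hmem := Submodule.apply_mem_span_image_of_mem_span A.mulVecLin hw
          rw [← Set.range_comp] at hmem
          refine Submodule.span_le.mpr ?_ hmem
          rintro x ⟨j, rfl⟩
          have : A.mulVecLin ((A ^ (j : ℕ)).mulVec b) = (A ^ ((j : ℕ) + 1)).mulVec b := by
            simp only [Matrix.mulVecLin_apply, Matrix.mulVec_mulVec, ← pow_succ']
          simp only [Function.comp]
          rw [this]
          exact hpow _)
      rcases this with ⟨h1, _⟩ | ⟨_, h2⟩
      · exact absurd h1 (by simp)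
      · exact h2
    · -- observability
      rw [hOinj]
      intro w hw
      set W₂ : Submodule ℂ (Fin n → ℂ) :=
        { carrier := {x | ∀ k : ℕ, c ⬝ᵥ (A ^ k).mulVec x = 0}
          add_mem' := by
            intro x y hx hy k
            simp [Matrix.mulVec_add, dotProduct_add, hx k, hy k]
          zero_mem' := by intro k; simp
          smul_mem' := by
            intro r x hx k
            simp [Matrix.mulVec_smul, dotProduct_smul, hx k] } with hW₂
      have hwmem : w ∈ W₂ := by
        intro k
        -- linear functional `M ↦ c ⬝ᵥ M.mulVec w` vanishes on the span of the `A^i`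
        let φ : Matrix (Fin n) (Fin n) ℂ →ₗ[ℂ] ℂ :=
          { toFun := fun M => c ⬝ᵥ M.mulVec w
            map_add' := fun M N => by simp [Matrix.add_mulVec, dotProduct_add]
            map_smul' := fun r M => by
              simp [Matrix.smul_mulVec, dotProduct_smul] }
        have hvanish : Submodule.span ℂ (Set.range fun i : Fin n => A ^ (i : ℕ)) ≤
            LinearMap.ker φ := by
          rw [Submodule.span_le]
          rintro x ⟨i, rfl⟩
          simpa [φ] using hw i
        have := hvanish (pow_mem_span_aux n A k)
        simpa [φ] using this
      have hres := h ⊥ W₂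
        (by
          intro s hs
          rw [Submodule.mem_bot] at hs
          subst hs
          simpa using W₂.zero_mem)
        (by
          intro x hx
          rw [Submodule.mem_bot]
          have := hx 0
          rwa [pow_zero, Matrix.one_mulVec] at this)
        (by
          intro x hx k
          have := hx (k + 1)
          rwa [pow_succ, ← Matrix.mulVec_mulVec] at this)
      rcases hres with ⟨_, h2⟩ | ⟨h1, _⟩
      · have := h2 ▸ hwmem
        simpa using this
      · exact absurd h1 (by simp)
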